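/- Let (Aⁿ, ∂) be a complete metric space with ∂ bounded by 1, and let P : Aⁿ → [0,1] be a function satisfying: (i) P(x̄) ≤ P(ȳ) + ∂(x̄,ȳ) for all x̄,ȳ (1-Lipschitz), and (ii) for every x̄ and every ε > 0 there exists ȳ with P(ȳ) < ε and ∂(x̄,ȳ) ≤ P(x̄) + ε. Then the zero-set D = {x̄ : P(x̄) = 0} is nonempty and P(x̄) = ∂(x̄,D) = inf over ā ∈ D of ∂(x̄,ā) for all x̄. -/

import Mathlib

theorem distance_predicate_characterization {B : Type*} [MetricSpace B]
    [CompleteSpace B] [Nonempty B]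
    (hbound : ∀ x y : B, dist x y ≤ 1)
    (P : B → ℝ) (hPI : ∀ x, P x ∈ Set.Icc (0:ℝ) 1)
    (hlip : ∀ x y : B, P x ≤ P y + dist x y)
    (hwit : ∀ x : B, ∀ ε > (0:ℝ), ∃ y : B, P y < ε ∧ dist x y ≤ P x + ε) :
    {x : B | P x = 0}.Nonempty ∧
    ∀ x : B, P x = Metric.infDist x {y : B | P y = 0} := by
  -- Key construction: for every x and ε > 0 there is z with P z = 0 and dist x z ≤ P x + 2ε
  have key : ∀ x : B, ∀ ε > (0:ℝ), ∃ z : B, P z = 0 ∧ dist x z ≤ P x + 2 * ε := by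
    intro x ε hε
    have hε2 : ∀ n : ℕ, (0:ℝ) < ε / 2 ^ (n + 1) := fun n => by positivity
    let a : ℕ → B := fun n =>
      Nat.rec x (fun n y => (hwit y (ε / 2 ^ (n + 1)) (hε2 n)).choose) n
    have haS : ∀ n, a (n + 1) = (hwit (a n) (ε / 2 ^ (n + 1)) (hε2 n)).choose :=
      fun n => rfl
    have hP : ∀ n, P (a (n + 1)) < ε / 2 ^ (n + 1) := fun n => by
      rw [haS n]; exact (hwit (a n) _ (hε2 n)).choose_spec.1
    have hd : ∀ n, dist (a n) (a (n + 1)) ≤ P (a n) + ε / 2 ^ (n + 1) := fun n => by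
      rw [haS n]; exact (hwit (a n) _ (hε2 n)).choose_spec.2
    -- the shifted sequence
    set b : ℕ → B := fun n => a (n + 1) with hb
    have hgeom : ∀ n, dist (b n) (b (n + 1)) ≤ (3 * ε / 4) * (1/2 : ℝ) ^ n := by
      intro n
      have h1 := hd (n + 1)
      have h2 := (hP n).le
      have : dist (a (n + 1)) (a (n + 2)) ≤ ε / 2 ^ (n + 1) + ε / 2 ^ (n + 2) := by
        calc dist (a (n + 1)) (a (n + 2)) ≤ P (a (n + 1)) + ε / 2 ^ (n + 2) := h1
          _ ≤ ε / 2 ^ (n + 1) + ε / 2 ^ (n + 2) := by linarith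
      calc dist (b n) (b (n + 1)) ≤ ε / 2 ^ (n + 1) + ε / 2 ^ (n + 2) := this
        _ = (3 * ε / 4) * (1/2 : ℝ) ^ n := by rw [one_div, inv_pow]; ring
    have hr : (1/2 : ℝ) < 1 := by norm_num
    have hcauchy : CauchySeq b := cauchySeq_of_le_geometric (1/2) (3 * ε / 4) hr hgeom
    obtain ⟨z, hz⟩ := cauchySeq_tendsto_of_complete hcauchy
    have hdz : dist (b 0) z ≤ (3 * ε / 4) / (1 - 1/2) :=
      dist_le_of_le_geometric_of_tendsto₀ (1/2) (3 * ε / 4) hr hgeom hz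
    have hPz : P z = 0 := by
      have hle : ∀ n : ℕ, P z ≤ ε / 2 ^ (n + 1) + dist z (b n) := by
        intro n
        calc P z ≤ P (b n) + dist z (b n) := hlip z (b n)
          _ ≤ ε / 2 ^ (n + 1) + dist z (b n) := by
              have := (hP n).le; linarith
      have htend : Filter.Tendsto (fun n : ℕ => ε / 2 ^ (n + 1) + dist z (b n))
          Filter.atTop (nhds 0) := by
        have h1 : Filter.Tendsto (fun n : ℕ => ε / 2 ^ (n + 1)) Filter.atTop (nhds 0) := by
          have : Filter.Tendsto (fun n : ℕ => (2:ℝ) ^ (n+1)) Filter.atTop Filter.atTop :=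
            (tendsto_pow_atTop_atTop_of_one_lt (by norm_num : (1:ℝ) < 2)).comp
              (Filter.tendsto_add_atTop_nat 1)
          simpa [div_eq_mul_inv] using
            Filter.Tendsto.const_mul ε this.inv_tendsto_atTop
        have h2 : Filter.Tendsto (fun n : ℕ => dist z (b n)) Filter.atTop (nhds 0) := by
          simpa [dist_comm] using tendsto_iff_dist_tendsto_zero.mp hz
        simpa using h1.add h2
      have h0 : P z ≤ 0 := le_of_tendsto_of_tendsto' tendsto_const_nhds htend hle
      exact le_antisymm h0 (hPI z).1
    refine ⟨z, hPz, ?_⟩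
    have hd0 : dist x (a 1) ≤ P x + ε / 2 := by
      have := hd 0
      have ha0 : a 0 = x := rfl
      simpa [ha0] using this
    calc dist x z ≤ dist x (a 1) + dist (a 1) z := dist_triangle _ _ _
      _ ≤ (P x + ε / 2) + (3 * ε / 4) / (1 - 1/2) := by
          have : dist (a 1) z ≤ (3 * ε / 4) / (1 - 1/2) := hdz
          linarith [hd0]
      _ = P x + 2 * ε := by ring
  -- Nonemptiness
  have hne : {x : B | P x = 0}.Nonempty := by
    obtain ⟨x⟩ := (inferInstance : Nonempty B)
    obtain ⟨z, hz, _⟩ := key x 1 one_pos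
    exact ⟨z, hz⟩
  refine ⟨hne, fun x => ?_⟩
  apply le_antisymm
  · -- P x ≤ infDist
    by_contra h
    push_neg at h
    obtain ⟨y, hy, hlt⟩ := (Metric.infDist_lt_iff hne).mp h
    have : P x ≤ dist x y := by
      have := hlip x y
      simp only [Set.mem_setOf_eq] at hy
      linarith [this, hy.le]
    linarith
  · -- infDist ≤ P x
    apply le_of_forall_pos_le_add
    intro ε hε
    obtain ⟨z, hz, hdist⟩ := key x (ε / 2) (by linarith)
    calc Metric.infDist x {y : B | P y = 0} ≤ dist x z :=
          Metric.infDist_le_dist_of_mem hz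
      _ ≤ P x + 2 * (ε / 2) := hdist
      _ = P x + ε := by ring
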